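/- arXiv:2406.14362 — 3 statements merged into one kernel-verified Lean document; each statement's English description precedes it below -/
import Mathlib

section
/- Let x be a fixed vector in R^d and let z1, z2 be independently and uniformly sampled from the unit sphere S^d. Then E[ |z1^T z2| (x^T z1)^2 ] <= ||x||_2^2 / d^{3/2}. -/
open MeasureTheory
open scoped ENNReal
open scoped Pointwise
open Metric

abbrev Euc (d : ℕ) := EuclideanSpace ℝ (Fin d)

/-- The uniform (rotation-invariant) probability measure on the unit sphere in `ℝ^d`. -/
noncomputable def uniformSphere (d : ℕ) :
    Measure (Metric.sphere (0 : Euc d) 1) :=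
  ((volume : Measure (Euc d)).toSphere Set.univ)⁻¹ • (volume : Measure (Euc d)).toSphere

instance uniformSphere_finite (d : ℕ) : IsFiniteMeasure (uniformSphere d) := by
  constructor
  rw [uniformSphere, Measure.smul_apply, smul_eq_mul]
  exact lt_of_le_of_lt (ENNReal.inv_mul_le_one _) ENNReal.one_lt_top

-- basic facts about toSphere univ
lemma toSphere_univ_ne_zero (d : ℕ) (hd : 0 < d) :
    (volume : Measure (Euc d)).toSphere Set.univ ≠ 0 := by
  rw [Measure.toSphere_apply_univ]
  have h1 : (Module.finrank ℝ (Euc d) : ℝ≥0∞) ≠ 0 := by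
    simp [finrank_euclideanSpace_fin, hd.ne']
  have h2 : (volume : Measure (Euc d)) (Metric.ball 0 1) ≠ 0 :=
    (Metric.measure_ball_pos _ _ one_pos).ne'
  exact mul_ne_zero h1 h2

lemma toSphere_univ_ne_top (d : ℕ) :
    (volume : Measure (Euc d)).toSphere Set.univ ≠ ⊤ :=
  (measure_lt_top _ _).ne

lemma uniformSphere_prob (d : ℕ) (hd : 0 < d) :
    IsProbabilityMeasure (uniformSphere d) := by
  constructor
  rw [uniformSphere, Measure.smul_apply, smul_eq_mul]
  exact ENNReal.inv_mul_cancel (toSphere_univ_ne_zero d hd) (toSphere_univ_ne_top d)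

-- measure preservation of linear isometries on Euc d
lemma isom_measurePreserving {d : ℕ} (e : Euc d ≃ₗᵢ[ℝ] Euc d) :
    MeasurePreserving e volume volume := by
  have h := ((EuclideanSpace.basisFun (Fin d) ℝ).map e.symm).measurePreserving_repr
  have he : ⇑((EuclideanSpace.basisFun (Fin d) ℝ).map e.symm).repr = ⇑e := by
    ext x i
    rfl
  rwa [he] at h

open scoped Pointwise
open Metric

open Metric in
/-- The map induced on the unit sphere by a linear isometry. -/
noncomputable def sphereMap {d : ℕ} (e : Euc d ≃ₗᵢ[ℝ] Euc d)
    (z : sphere (0 : Euc d) 1) : sphere (0 : Euc d) 1 :=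
  ⟨e z, by
    have := mem_sphere_zero_iff_norm.mp z.2
    simp [mem_sphere_zero_iff_norm, e.norm_map, this]⟩

lemma sphereMap_continuous {d : ℕ} (e : Euc d ≃ₗᵢ[ℝ] Euc d) :
    Continuous (sphereMap e) :=
  Continuous.subtype_mk (e.continuous.comp continuous_subtype_val) _

lemma image_preimage_sphereMap {d : ℕ} (e : Euc d ≃ₗᵢ[ℝ] Euc d)
    (s : Set (Metric.sphere (0 : Euc d) 1)) :
    (Subtype.val '' (sphereMap e ⁻¹' s)) = ⇑e ⁻¹' (Subtype.val '' s) := by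
  ext z
  constructor
  · rintro ⟨w, hw, rfl⟩
    exact ⟨sphereMap e w, hw, rfl⟩
  · rintro ⟨w, hw, hwz⟩
    have hz : z ∈ Metric.sphere (0 : Euc d) 1 := by
      have h1 : ‖e z‖ = 1 := by
        rw [← hwz]; exact mem_sphere_zero_iff_norm.mp w.2
      rw [e.norm_map] at h1
      exact mem_sphere_zero_iff_norm.2 h1
    refine ⟨⟨z, hz⟩, ?_, rfl⟩
    have : sphereMap e ⟨z, hz⟩ = w := Subtype.ext hwz.symm
    rw [Set.mem_preimage, this]; exact hw

lemma toSphere_map {d : ℕ} (e : Euc d ≃ₗᵢ[ℝ] Euc d) :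
    Measure.map (sphereMap e) ((volume : Measure (Euc d)).toSphere)
      = (volume : Measure (Euc d)).toSphere := by
  refine Measure.ext fun s hs => ?_
  rw [Measure.map_apply ((sphereMap_continuous e).measurable) hs,
    Measure.toSphere_apply' _ (((sphereMap_continuous e).measurable) hs),
    Measure.toSphere_apply' _ hs, image_preimage_sphereMap]
  congr 1
  have hset : (Set.Ioo (0:ℝ) 1) • (⇑e ⁻¹' (Subtype.val '' s))
      = ⇑e ⁻¹' ((Set.Ioo (0:ℝ) 1) • (Subtype.val '' s)) := by
    ext z
    simp only [Set.mem_smul_set, Set.mem_preimage]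
    constructor
    · rintro ⟨r, hr, w, hw, rfl⟩
      exact ⟨r, hr, e w, hw, (e.map_smul r w).symm⟩
    · rintro ⟨r, hr, w, hw, hrw⟩
      have hrw' : r • w = e z := hrw
      refine ⟨r, hr, e.symm w, by simpa using hw, ?_⟩
      apply e.injective
      rw [e.map_smul, e.apply_symm_apply, hrw']
  rw [hset]
  have hmp := (isom_measurePreserving e).map_eq
  have h2 : Measure.map (⇑e) volume ((Set.Ioo (0:ℝ) 1) • (Subtype.val '' s))
      = volume (⇑e ⁻¹' ((Set.Ioo (0:ℝ) 1) • (Subtype.val '' s))) :=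
    MeasurableEquiv.map_apply e.toHomeomorph.toMeasurableEquiv _
  rw [← h2, hmp]

lemma uniformSphere_map {d : ℕ} (e : Euc d ≃ₗᵢ[ℝ] Euc d) :
    Measure.map (sphereMap e) (uniformSphere d) = uniformSphere d := by
  rw [uniformSphere, Measure.map_smul, toSphere_map]

lemma integrable_of_continuous {d : ℕ} {f : sphere (0 : Euc d) 1 → ℝ}
    (hf : Continuous f) : Integrable f (uniformSphere d) :=
  hf.integrable_of_hasCompactSupport (HasCompactSupport.of_compactSpace f)

lemma integral_sphereMap {d : ℕ} (e : Euc d ≃ₗᵢ[ℝ] Euc d)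
    {g : sphere (0 : Euc d) 1 → ℝ} (hg : Continuous g) :
    ∫ z, g (sphereMap e z) ∂(uniformSphere d) = ∫ z, g z ∂(uniformSphere d) := by
  conv_rhs => rw [← uniformSphere_map e]
  rw [integral_map (sphereMap_continuous e).aemeasurable hg.aestronglyMeasurable]

/-- The second moment function. -/
lemma second_moment_eq {d : ℕ} (u v : Euc d) (hu : ‖u‖ = 1) (hv : ‖v‖ = 1) :
    ∫ z, (inner ℝ u (z : Euc d) : ℝ) ^ 2 ∂(uniformSphere d)
      = ∫ z, (inner ℝ v (z : Euc d) : ℝ) ^ 2 ∂(uniformSphere d) := by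
  set e : Euc d ≃ₗᵢ[ℝ] Euc d := Submodule.reflection (ℝ ∙ (u - v))ᗮ with he
  have heu : e u = v := Submodule.reflection_sub (by rw [hu, hv])
  have hg : Continuous fun z : sphere (0 : Euc d) 1 => (inner ℝ v (z : Euc d) : ℝ) ^ 2 :=
    ((continuous_const.inner continuous_subtype_val).pow 2)
  calc ∫ z, (inner ℝ u (z : Euc d) : ℝ) ^ 2 ∂(uniformSphere d)
      = ∫ z, (inner ℝ v ((sphereMap e z : sphere (0 : Euc d) 1) : Euc d) : ℝ) ^ 2
          ∂(uniformSphere d) := by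
        refine integral_congr_ae (Filter.Eventually.of_forall fun z => ?_)
        have : (inner ℝ v (e (z : Euc d)): ℝ) = inner ℝ u (z : Euc d) := by
          rw [← heu, e.inner_map_map]
        show (inner ℝ u (z : Euc d) : ℝ) ^ 2 = (inner ℝ v (e (z : Euc d)) : ℝ) ^ 2
        rw [this]
    _ = ∫ z, (inner ℝ v (z : Euc d) : ℝ) ^ 2 ∂(uniformSphere d) := integral_sphereMap e hg

lemma second_moment_unit {d : ℕ} (hd : 0 < d) (u : Euc d) (hu : ‖u‖ = 1) :
    ∫ z, (inner ℝ u (z : Euc d) : ℝ) ^ 2 ∂(uniformSphere d) = 1 / d := by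
  haveI := uniformSphere_prob d hd
  set F : Euc d → ℝ := fun a => ∫ z, (inner ℝ a (z : Euc d) : ℝ) ^ 2 ∂(uniformSphere d) with hF
  have hsum : ∑ i : Fin d, F (EuclideanSpace.single i 1) = 1 := by
    rw [hF]
    rw [← integral_finset_sum _ (fun i _ =>
      integrable_of_continuous (f := fun z : sphere (0 : Euc d) 1 =>
        (inner ℝ (EuclideanSpace.single i (1:ℝ)) (z : Euc d) : ℝ) ^ 2)
        ((continuous_const.inner continuous_subtype_val).pow 2))]
    have : ∀ z : sphere (0 : Euc d) 1,
        ∑ i : Fin d, (inner ℝ (EuclideanSpace.single i (1:ℝ)) (z : Euc d) : ℝ) ^ 2 = 1 := by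
      intro z
      have hz : ‖(z : Euc d)‖ = 1 := mem_sphere_zero_iff_norm.mp z.2
      have hn := EuclideanSpace.norm_eq (z : Euc d)
      calc ∑ i : Fin d, (inner ℝ (EuclideanSpace.single i (1:ℝ)) (z : Euc d) : ℝ) ^ 2
          = ∑ i : Fin d, ((z : Euc d) i) ^ 2 := by
            refine Finset.sum_congr rfl fun i _ => ?_
            rw [EuclideanSpace.inner_single_left]
            simp
        _ = 1 := by
            have h2 : ∑ i : Fin d, ((z : Euc d) i) ^ 2 = ‖(z : Euc d)‖ ^ 2 := by
              rw [hn, Real.sq_sqrt (Finset.sum_nonneg fun i _ => sq_nonneg _)]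
              refine Finset.sum_congr rfl fun i _ => ?_
              simp [Real.norm_eq_abs, sq_abs]
            rw [h2, hz, one_pow]
    simp_rw [this]
    simp
  have hconst : ∀ i : Fin d, F (EuclideanSpace.single i 1) = F u := by
    intro i
    exact second_moment_eq _ _ (by simp [EuclideanSpace.norm_single]) hu
  rw [Finset.sum_congr rfl (fun i _ => hconst i), Finset.sum_const, Finset.card_univ,
    Fintype.card_fin, nsmul_eq_mul] at hsum
  have hd' : (d : ℝ) ≠ 0 := Nat.cast_ne_zero.mpr hd.ne'
  show F u = 1 / d
  rw [eq_div_iff hd']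
  linarith [hsum]

lemma second_moment {d : ℕ} (hd : 0 < d) (x : Euc d) :
    ∫ z, (inner ℝ x (z : Euc d) : ℝ) ^ 2 ∂(uniformSphere d) = ‖x‖ ^ 2 / d := by
  rcases eq_or_ne x 0 with rfl | hx
  · simp
  · have hnx : ‖x‖ ≠ 0 := norm_ne_zero_iff.mpr hx
    have hu : ‖(‖x‖⁻¹ • x : Euc d)‖ = 1 := by
      rw [norm_smul, norm_inv, norm_norm, inv_mul_cancel₀ hnx]
    have key := second_moment_unit hd _ hu
    have : ∀ z : sphere (0 : Euc d) 1,
        (inner ℝ x (z : Euc d) : ℝ) ^ 2 = ‖x‖ ^ 2 * (inner ℝ (‖x‖⁻¹ • x : Euc d) (z : Euc d) : ℝ) ^ 2 := by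
      intro z
      rw [real_inner_smul_left]
      field_simp
    simp_rw [this]
    rw [integral_const_mul, key]
    field_simp

lemma abs_moment_eq {d : ℕ} (u v : Euc d) (hu : ‖u‖ = 1) (hv : ‖v‖ = 1) :
    ∫ z, |(inner ℝ u (z : Euc d) : ℝ)| ∂(uniformSphere d)
      = ∫ z, |(inner ℝ v (z : Euc d) : ℝ)| ∂(uniformSphere d) := by
  set e : Euc d ≃ₗᵢ[ℝ] Euc d := Submodule.reflection (ℝ ∙ (u - v))ᗮ with he
  have heu : e u = v := Submodule.reflection_sub (by rw [hu, hv])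
  have hg : Continuous fun z : sphere (0 : Euc d) 1 => |(inner ℝ v (z : Euc d) : ℝ)| :=
    (continuous_const.inner continuous_subtype_val).abs
  calc ∫ z, |(inner ℝ u (z : Euc d) : ℝ)| ∂(uniformSphere d)
      = ∫ z, |(inner ℝ v ((sphereMap e z : sphere (0 : Euc d) 1) : Euc d) : ℝ)|
          ∂(uniformSphere d) := by
        refine integral_congr_ae (Filter.Eventually.of_forall fun z => ?_)
        have h1 : (inner ℝ v (e (z : Euc d)): ℝ) = inner ℝ u (z : Euc d) := by
          rw [← heu, e.inner_map_map]
        show |(inner ℝ u (z : Euc d) : ℝ)| = |(inner ℝ v (e (z : Euc d)) : ℝ)|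
        rw [h1]
    _ = ∫ z, |(inner ℝ v (z : Euc d) : ℝ)| ∂(uniformSphere d) := integral_sphereMap e hg

lemma abs_moment_le {d : ℕ} (hd : 0 < d) (u : Euc d) (hu : ‖u‖ = 1) :
    ∫ z, |(inner ℝ u (z : Euc d) : ℝ)| ∂(uniformSphere d) ≤ Real.sqrt (1 / d) := by
  haveI := uniformSphere_prob d hd
  set X : sphere (0 : Euc d) 1 → ℝ := fun z => |(inner ℝ u (z : Euc d) : ℝ)| with hX
  have hXc : Continuous X := (continuous_const.inner continuous_subtype_val).abs
  have hmem : MemLp X 2 (uniformSphere d) := by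
    refine MemLp.of_bound hXc.aestronglyMeasurable 1 (Filter.Eventually.of_forall fun z => ?_)
    have hz : ‖(z : Euc d)‖ = 1 := mem_sphere_zero_iff_norm.mp z.2
    have := abs_real_inner_le_norm u (z : Euc d)
    rw [hu, hz] at this
    simpa [hX, abs_abs] using this
  have hvar := ProbabilityTheory.variance_nonneg X (uniformSphere d)
  rw [ProbabilityTheory.variance_eq_sub hmem] at hvar
  have hsq : (∫ z, X z ∂(uniformSphere d)) ^ 2 ≤ ∫ z, (X z) ^ 2 ∂(uniformSphere d) := by
    have : ∫ z, (X ^ 2) z ∂(uniformSphere d) = ∫ z, (X z) ^ 2 ∂(uniformSphere d) := rfl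
    linarith [hvar, this]
  have h2 : ∫ z, (X z) ^ 2 ∂(uniformSphere d) = 1 / d := by
    have : ∀ z : sphere (0 : Euc d) 1, (X z) ^ 2 = (inner ℝ u (z : Euc d) : ℝ) ^ 2 := by
      intro z; rw [hX]; exact sq_abs _
    simp_rw [this]
    rw [second_moment hd u, hu]
    norm_num
  rw [h2] at hsq
  have hnn : 0 ≤ ∫ z, X z ∂(uniformSphere d) :=
    integral_nonneg fun z => abs_nonneg _
  exact (Real.le_sqrt hnn (by positivity)).mpr hsq

/-- For a fixed `x ∈ ℝ^d` and `z1, z2` independent uniform on the sphere,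
`E[|z1ᵀ z2| (xᵀ z1)²] ≤ ‖x‖² / d^{3/2}`. -/
theorem stmt4 (d : ℕ) (hd : 0 < d) (x : Euc d) :
    ∫ z1 : Metric.sphere (0 : Euc d) 1, ∫ z2 : Metric.sphere (0 : Euc d) 1,
        |(inner ℝ (z1 : Euc d) (z2 : Euc d) : ℝ)| * (inner ℝ x (z1 : Euc d) : ℝ) ^ 2
        ∂(uniformSphere d) ∂(uniformSphere d)
      ≤ ‖x‖ ^ 2 / Real.sqrt ((d : ℝ) ^ 3) := by
  haveI := uniformSphere_prob d hd
  set v : Euc d := EuclideanSpace.single (⟨0, hd⟩ : Fin d) 1 with hvdef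
  have hv : ‖v‖ = 1 := by simp [hvdef, EuclideanSpace.norm_single]
  set c : ℝ := ∫ z, |(inner ℝ v (z : Euc d) : ℝ)| ∂(uniformSphere d) with hc
  have hc0 : 0 ≤ c := integral_nonneg fun z => abs_nonneg _
  have hcle : c ≤ Real.sqrt (1 / d) := abs_moment_le hd v hv
  have hinner : ∀ z1 : Metric.sphere (0 : Euc d) 1,
      ∫ z2 : Metric.sphere (0 : Euc d) 1,
        |(inner ℝ (z1 : Euc d) (z2 : Euc d) : ℝ)| * (inner ℝ x (z1 : Euc d) : ℝ) ^ 2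
        ∂(uniformSphere d)
      = (inner ℝ x (z1 : Euc d) : ℝ) ^ 2 * c := by
    intro z1
    have hz1 : ‖(z1 : Euc d)‖ = 1 := mem_sphere_zero_iff_norm.mp z1.2
    have habs : ∫ z2, |(inner ℝ (z1 : Euc d) (z2 : Euc d) : ℝ)| ∂(uniformSphere d) = c :=
      abs_moment_eq _ _ hz1 hv
    calc ∫ z2 : Metric.sphere (0 : Euc d) 1,
          |(inner ℝ (z1 : Euc d) (z2 : Euc d) : ℝ)| * (inner ℝ x (z1 : Euc d) : ℝ) ^ 2
          ∂(uniformSphere d)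
        = ∫ z2 : Metric.sphere (0 : Euc d) 1,
            (inner ℝ x (z1 : Euc d) : ℝ) ^ 2 * |(inner ℝ (z1 : Euc d) (z2 : Euc d) : ℝ)|
            ∂(uniformSphere d) := by
          refine integral_congr_ae (Filter.Eventually.of_forall fun z2 => ?_)
          exact mul_comm _ _
      _ = (inner ℝ x (z1 : Euc d) : ℝ) ^ 2
            * ∫ z2, |(inner ℝ (z1 : Euc d) (z2 : Euc d) : ℝ)| ∂(uniformSphere d) :=
          integral_const_mul _ _
      _ = (inner ℝ x (z1 : Euc d) : ℝ) ^ 2 * c := by rw [habs]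
  calc ∫ z1 : Metric.sphere (0 : Euc d) 1, ∫ z2 : Metric.sphere (0 : Euc d) 1,
        |(inner ℝ (z1 : Euc d) (z2 : Euc d) : ℝ)| * (inner ℝ x (z1 : Euc d) : ℝ) ^ 2
        ∂(uniformSphere d) ∂(uniformSphere d)
      = ∫ z1 : Metric.sphere (0 : Euc d) 1, (inner ℝ x (z1 : Euc d) : ℝ) ^ 2 * c
          ∂(uniformSphere d) :=
        integral_congr_ae (Filter.Eventually.of_forall hinner)
    _ = (∫ z1 : Metric.sphere (0 : Euc d) 1, (inner ℝ x (z1 : Euc d) : ℝ) ^ 2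
          ∂(uniformSphere d)) * c := integral_mul_const _ _
    _ = ‖x‖ ^ 2 / d * c := by rw [second_moment hd x]
    _ ≤ ‖x‖ ^ 2 / d * Real.sqrt (1 / d) := by
        apply mul_le_mul_of_nonneg_left hcle (by positivity)
    _ = ‖x‖ ^ 2 / Real.sqrt ((d : ℝ) ^ 3) := by
        have hd' : (0:ℝ) < d := Nat.cast_pos.mpr hd
        have hsd : 0 < Real.sqrt d := Real.sqrt_pos.mpr hd'
        rw [show ((d:ℝ))^3 = (d:ℝ)^2 * d by ring,
          Real.sqrt_mul (by positivity), Real.sqrt_sq hd'.le,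
          one_div, Real.sqrt_inv]
        field_simp
end

section
/- Let F : R^d -> R be L-smooth, mu > 0, and define g(w, z) = d * (F(w + mu*z) - F(w - mu*z))/(2*mu) * z for z uniform on the unit sphere S^d. Then E_z[ ||g(w, z)||_2^2 ] <= 2*d*||grad F(w)||_2^2 + (L^2 * mu^2 * d^2)/2. -/
open MeasureTheory Real Set Metric
open scoped RealInnerProductSpace ENNReal

/-! ### Taylor-type estimate from Lipschitz gradient -/

theorem taylor_aux {d : ℕ} {F : Euc d → ℝ} {L : ℝ}
    (hF : Differentiable ℝ F)
    (hsm : ∀ x y : Euc d, ‖gradient F x - gradient F y‖ ≤ L * ‖x - y‖)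
    (w v : Euc d) :
    |F (w + v) - F w - ⟪gradient F w, v⟫| ≤ L * ‖v‖ ^ 2 / 2 := by
  set g := gradient F w with hg
  have path : ∀ t : ℝ, HasDerivAt (fun t : ℝ => F (w + t • v))
      ⟪gradient F (w + t • v), v⟫ t := by
    intro t
    have h1 : HasDerivAt (fun t : ℝ => w + t • v) v t := by
      simpa using ((hasDerivAt_id t).smul_const v).const_add w
    have h2 := ((hF (w + t • v)).hasGradientAt).hasFDerivAt
    have := h2.comp_hasDerivAt t h1
    exact this.congr_deriv (by simp)
  set f : ℝ → ℝ := fun t => F (w + t • v) - F w - t * ⟪g, v⟫ with hf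
  have hderiv : ∀ t : ℝ, HasDerivAt f (⟪gradient F (w + t • v), v⟫ - ⟪g, v⟫) t := by
    intro t
    have := ((path t).sub_const (F w)).sub ((hasDerivAt_id t).mul_const ⟪g, v⟫)
    exact this.congr_deriv (by simp)
  have hcont : ContinuousOn f (Icc (0:ℝ) 1) :=
    fun t _ => (hderiv t).continuousAt.continuousWithinAt
  have hder : ∀ x ∈ Ico (0:ℝ) 1, HasDerivWithinAt f
      (⟪gradient F (w + x • v), v⟫ - ⟪g, v⟫) (Ici x) x :=
    fun t _ => (hderiv t).hasDerivWithinAt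
  have ha : ‖f 0‖ ≤ L * ‖v‖ ^ 2 / 2 * (0:ℝ) ^ 2 := by simp [f]
  have hB : ∀ x : ℝ, HasDerivAt (fun t => L * ‖v‖ ^ 2 / 2 * t ^ 2) (L * ‖v‖ ^ 2 * x) x := by
    intro x
    have := (hasDerivAt_pow 2 x).const_mul (L * ‖v‖ ^ 2 / 2)
    refine this.congr_deriv ?_
    ring
  have bound : ∀ x ∈ Ico (0:ℝ) 1,
      ‖⟪gradient F (w + x • v), v⟫ - ⟪g, v⟫‖ ≤ L * ‖v‖ ^ 2 * x := by
    intro x hx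
    have h1 : ⟪gradient F (w + x • v), v⟫ - ⟪g, v⟫ = ⟪gradient F (w + x • v) - g, v⟫ := by
      rw [inner_sub_left]
    rw [Real.norm_eq_abs, h1]
    calc |⟪gradient F (w + x • v) - g, v⟫| ≤ ‖gradient F (w + x • v) - g‖ * ‖v‖ :=
          abs_real_inner_le_norm _ _
      _ ≤ (L * ‖x • v‖) * ‖v‖ := by
          have := hsm (w + x • v) w
          simp only [add_sub_cancel_left] at this
          exact mul_le_mul_of_nonneg_right this (norm_nonneg _)
      _ ≤ L * ‖v‖ ^ 2 * x := by
          rw [norm_smul, Real.norm_eq_abs, abs_of_nonneg hx.1]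
          ring_nf
          exact le_refl _
  have key := image_norm_le_of_norm_deriv_right_le_deriv_boundary
    (B := fun t => L * ‖v‖ ^ 2 / 2 * t ^ 2) hcont hder ha hB bound
  have := key (right_mem_Icc.2 zero_le_one)
  simpa [f, Real.norm_eq_abs] using this

theorem pointwise_bound {d : ℕ} {F : Euc d → ℝ} {L μ : ℝ} (hμ : 0 < μ)
    (hF : Differentiable ℝ F)
    (hsm : ∀ x y : Euc d, ‖gradient F x - gradient F y‖ ≤ L * ‖x - y‖)
    (w z : Euc d) (hz : ‖z‖ = 1) :
    ((d : ℝ) * (F (w + μ • z) - F (w - μ • z)) / (2 * μ)) ^ 2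
      ≤ 2 * (d : ℝ) ^ 2 * ⟪gradient F w, z⟫ ^ 2 + L ^ 2 * μ ^ 2 * (d : ℝ) ^ 2 / 2 := by
  set g := gradient F w with hg
  set s := ⟪g, z⟫ with hs
  have hnv : ‖μ • z‖ = μ := by
    rw [norm_smul, Real.norm_eq_abs, abs_of_pos hμ, hz, mul_one]
  have h1 := taylor_aux hF hsm w (μ • z)
  have h2 := taylor_aux hF hsm w (-(μ • z))
  rw [hnv] at h1
  rw [norm_neg, hnv] at h2
  rw [real_inner_smul_right] at h1
  rw [inner_neg_right, real_inner_smul_right, ← sub_eq_add_neg] at h2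
  rw [← hs] at h1 h2
  set A := F (w + μ • z) - F w - μ * s with hA
  set B := F (w - μ • z) - F w - -(μ * s) with hB
  have expand : F (w + μ • z) - F (w - μ • z) = A - B + 2 * μ * s := by
    rw [hA, hB]; ring
  rw [expand]
  have hA' := abs_le.1 h1
  have hB' := abs_le.1 h2
  have h4 : (A - B) ^ 2 ≤ (L * μ ^ 2) ^ 2 := by nlinarith
  have h3 : (A - B + 2 * μ * s) ^ 2 ≤ 2 * (A - B) ^ 2 + 8 * μ ^ 2 * s ^ 2 := by
    nlinarith [sq_nonneg (A - B - 2 * μ * s)]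
  rw [div_pow, div_le_iff₀ (by positivity : (0:ℝ) < (2 * μ) ^ 2)]
  have hd0 : (0:ℝ) ≤ (d : ℝ) ^ 2 := by positivity
  have e1 : ((d:ℝ) * (A - B + 2 * μ * s)) ^ 2 = (d:ℝ) ^ 2 * (A - B + 2 * μ * s) ^ 2 := by ring
  rw [e1]
  calc (d:ℝ) ^ 2 * (A - B + 2 * μ * s) ^ 2
      ≤ (d:ℝ) ^ 2 * (2 * (A - B) ^ 2 + 8 * μ ^ 2 * s ^ 2) := mul_le_mul_of_nonneg_left h3 hd0
    _ ≤ (d:ℝ) ^ 2 * (2 * (L * μ ^ 2) ^ 2 + 8 * μ ^ 2 * s ^ 2) :=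
        mul_le_mul_of_nonneg_left (by linarith) hd0
    _ = (2 * (d:ℝ) ^ 2 * s ^ 2 + L ^ 2 * μ ^ 2 * (d:ℝ) ^ 2 / 2) * (2 * μ) ^ 2 := by ring

/-! ### One-dimensional Gaussian integrals -/

lemma int_e : Integrable (fun t : ℝ => exp (-t ^ 2)) := by
  simpa using integrable_exp_neg_mul_sq (one_pos)

lemma int_te : Integrable (fun t : ℝ => t * exp (-t ^ 2)) := by
  simpa using integrable_mul_exp_neg_mul_sq (one_pos)

lemma int_t2e : Integrable (fun t : ℝ => t ^ 2 * exp (-t ^ 2)) := by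
  have h := integrable_rpow_mul_exp_neg_mul_sq (one_pos) (show (-1:ℝ) < ((2:ℕ):ℝ) by norm_num)
  simpa [Real.rpow_natCast] using h

lemma val_te : ∫ t : ℝ, t * exp (-t ^ 2) = 0 := by
  have h := integral_neg_eq_self (fun t : ℝ => t * exp (-t ^ 2)) (volume : Measure ℝ)
  simp only [neg_sq, neg_mul] at h
  have h2 : ∫ t : ℝ, -(t * exp (-t ^ 2)) = ∫ t : ℝ, t * exp (-t ^ 2) := h
  rw [integral_neg] at h2
  linarith

lemma val_t2e_pos : 0 < ∫ t : ℝ, t ^ 2 * exp (-t ^ 2) := by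
  rw [integral_pos_iff_support_of_nonneg (fun t => by positivity) int_t2e]
  have hsub : Set.Ioi (0:ℝ) ⊆ Function.support fun t : ℝ => t ^ 2 * exp (-t ^ 2) := by
    intro t ht
    have h0 : (0:ℝ) < t := ht
    have : (0:ℝ) < t ^ 2 * exp (-t ^ 2) := mul_pos (pow_pos h0 2) (exp_pos _)
    exact this.ne'
  calc (0:ℝ≥0∞) < volume (Set.Ioi (0:ℝ)) := by simp [Real.volume_Ioi]
    _ ≤ _ := measure_mono hsub

lemma val_e_pos : 0 < ∫ t : ℝ, exp (-t ^ 2) := by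
  have := integral_gaussian 1
  simp only [neg_mul, one_mul, div_one] at this
  rw [this]
  positivity

/-! ### Gaussian moments on `ℝ^d` -/

noncomputable def gaussC (d : ℕ) : ℝ :=
  (∫ t : ℝ, t ^ 2 * exp (-t ^ 2)) * (∫ t : ℝ, exp (-t ^ 2)) ^ (d - 1)

lemma gaussC_pos (d : ℕ) : 0 < gaussC d :=
  mul_pos val_t2e_pos (pow_pos val_e_pos _)

lemma prod_form (d : ℕ) (i j : Fin d) (y : Fin d → ℝ) :
    y i * y j * exp (-∑ k, (y k) ^ 2) =
      ∏ k, ((if i = k then y k else 1) * (if j = k then y k else 1) * exp (-(y k) ^ 2)) := by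
  rw [Finset.prod_mul_distrib, Finset.prod_mul_distrib]
  rw [Finset.prod_ite_eq, Finset.prod_ite_eq]
  simp only [Finset.mem_univ, if_true]
  congr 1
  rw [← Real.exp_sum]
  congr 1
  rw [← Finset.sum_neg_distrib]

lemma gauss_integrable (d : ℕ) (i j : Fin d) :
    Integrable (fun y : Fin d → ℝ => y i * y j * exp (-∑ k, (y k) ^ 2)) := by
  have : (fun y : Fin d → ℝ => y i * y j * exp (-∑ k, (y k) ^ 2)) =
      fun y => ∏ k, ((if i = k then y k else 1) * (if j = k then y k else 1) * exp (-(y k) ^ 2)) := by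
    funext y; exact prod_form d i j y
  rw [this]
  apply Integrable.fintype_prod
    (f := fun k t => (if i = k then t else 1) * (if j = k then t else 1) * exp (-t ^ 2))
  intro k
  by_cases h1 : i = k <;> by_cases h2 : j = k
  · simp only [if_pos h1, if_pos h2]
    simpa [pow_two, mul_assoc] using int_t2e
  · simp only [if_pos h1, if_neg h2, mul_one]
    exact int_te
  · simp only [if_neg h1, if_pos h2, one_mul]
    exact int_te
  · simp only [if_neg h1, if_neg h2, one_mul, mul_one]
    exact int_e

lemma gauss_cross (d : ℕ) (i j : Fin d) (hij : i ≠ j) :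
    ∫ y : Fin d → ℝ, y i * y j * exp (-∑ k, (y k) ^ 2) = 0 := by
  simp_rw [prod_form d i j]
  rw [volume_pi, integral_fintype_prod_eq_prod (μ := fun _ => volume)
    (f := fun k t => (if i = k then t else 1) * (if j = k then t else 1) * exp (-t ^ 2))]
  apply Finset.prod_eq_zero (Finset.mem_univ i)
  have hji : ¬ (j = i) := fun h => hij h.symm
  have he : ∀ t : ℝ, (if i = i then t else 1) * (if j = i then t else 1) * exp (-t ^ 2)
      = t * exp (-t ^ 2) := by
    intro t
    rw [if_pos rfl, if_neg hji, mul_one]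
  calc (∫ t : ℝ, (if i = i then t else 1) * (if j = i then t else 1) * exp (-t ^ 2))
      = ∫ t : ℝ, t * exp (-t ^ 2) := by
        congr 1; funext t; exact he t
    _ = 0 := val_te

lemma gauss_diag (d : ℕ) (i : Fin d) :
    ∫ y : Fin d → ℝ, y i * y i * exp (-∑ k, (y k) ^ 2) = gaussC d := by
  simp_rw [prod_form d i i]
  rw [volume_pi, integral_fintype_prod_eq_prod (μ := fun _ => volume)
    (f := fun k t => (if i = k then t else 1) * (if i = k then t else 1) * exp (-t ^ 2))]
  rw [← Finset.mul_prod_erase Finset.univ _ (Finset.mem_univ i)]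
  have h1 : ∫ t : ℝ, (if i = i then t else 1) * (if i = i then t else 1) * exp (-t ^ 2)
      = ∫ t : ℝ, t ^ 2 * exp (-t ^ 2) := by
    congr 1; funext t; simp [pow_two]
  have h2 : ∀ k ∈ Finset.univ.erase i,
      (∫ t : ℝ, (if i = k then t else 1) * (if i = k then t else 1) * exp (-t ^ 2))
      = ∫ t : ℝ, exp (-t ^ 2) := by
    intro k hk
    have : i ≠ k := fun h => (Finset.mem_erase.1 hk).1 h.symm
    congr 1; funext t; simp [this]
  rw [h1, Finset.prod_congr rfl h2, Finset.prod_const]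
  have hcard : (Finset.univ.erase i).card = d - 1 := by
    rw [Finset.card_erase_of_mem (Finset.mem_univ i), Finset.card_univ, Fintype.card_fin]
  rw [hcard, gaussC]

lemma euc_to_pi (d : ℕ) (f : Euc d → ℝ) :
    ∫ x : Euc d, f x = ∫ y : Fin d → ℝ, f ((MeasurableEquiv.toLp 2 (Fin d → ℝ)) y) := by
  rw [← ((EuclideanSpace.volume_preserving_symm_measurableEquiv_toLp (Fin d)).symm).integral_comp'
    (f := (MeasurableEquiv.toLp 2 (Fin d → ℝ)).symm.symm) f]
  rfl

lemma coord_symm (d : ℕ) (y : Fin d → ℝ) (i : Fin d) :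
    ((MeasurableEquiv.toLp 2 (Fin d → ℝ)) y : Euc d) i = y i := rfl

lemma norm_sq_symm (d : ℕ) (y : Fin d → ℝ) :
    ‖((MeasurableEquiv.toLp 2 (Fin d → ℝ)) y : Euc d)‖ ^ 2 = ∑ k, (y k) ^ 2 := by
  rw [EuclideanSpace.norm_eq]
  rw [Real.sq_sqrt (by positivity)]
  congr 1
  funext k
  rw [coord_symm]
  rw [Real.norm_eq_abs, sq_abs]

lemma inner_symm (d : ℕ) (g : Euc d) (y : Fin d → ℝ) :
    ⟪g, ((MeasurableEquiv.toLp 2 (Fin d → ℝ)) y : Euc d)⟫ = ∑ i, g i * y i := by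
  rw [PiLp.inner_apply]
  simp [coord_symm, RCLike.inner_apply, conj_trivial]
  exact Finset.sum_congr rfl fun i _ => mul_comm _ _

lemma G1 (d : ℕ) (g : Euc d) :
    ∫ x : Euc d, ⟪g, x⟫ ^ 2 * exp (-‖x‖ ^ 2) = gaussC d * ‖g‖ ^ 2 := by
  rw [euc_to_pi d (fun x => ⟪g, x⟫ ^ 2 * exp (-‖x‖ ^ 2))]
  have h1 : ∀ y : Fin d → ℝ,
      ⟪g, ((MeasurableEquiv.toLp 2 (Fin d → ℝ)) y : Euc d)⟫ ^ 2
        * exp (-‖((MeasurableEquiv.toLp 2 (Fin d → ℝ)) y : Euc d)‖ ^ 2)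
      = ∑ i, ∑ j, (g i * g j) * (y i * y j * exp (-∑ k, (y k) ^ 2)) := by
    intro y
    rw [inner_symm, norm_sq_symm, pow_two, Finset.sum_mul_sum]
    rw [Finset.sum_mul]
    congr 1; funext i
    rw [Finset.sum_mul]
    congr 1; funext j
    ring
  simp_rw [h1]
  rw [integral_finset_sum _ (fun i _ => integrable_finset_sum _
    (fun j _ => ((gauss_integrable d i j).const_mul _)))]
  have h2 : ∀ i, ∫ y : Fin d → ℝ, ∑ j, (g i * g j) * (y i * y j * exp (-∑ k, (y k) ^ 2))
      = ∑ j, (g i * g j) * ∫ y : Fin d → ℝ, y i * y j * exp (-∑ k, (y k) ^ 2) := by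
    intro i
    rw [integral_finset_sum _ (fun j _ => ((gauss_integrable d i j).const_mul _))]
    congr 1; funext j
    rw [MeasureTheory.integral_const_mul]
  simp_rw [h2]
  have h3 : ∀ i : Fin d, ∑ j, (g i * g j) * ∫ y : Fin d → ℝ, y i * y j * exp (-∑ k, (y k) ^ 2)
      = g i ^ 2 * gaussC d := by
    intro i
    rw [Finset.sum_eq_single i]
    · rw [gauss_diag]; ring
    · intro j _ hji
      rw [gauss_cross d i j (fun h => hji h.symm), mul_zero]
    · intro h; exact absurd (Finset.mem_univ i) h
  simp_rw [h3]
  rw [← Finset.sum_mul]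
  have h4 : ∑ i, g i ^ 2 = ‖g‖ ^ 2 := by
    rw [EuclideanSpace.norm_eq, Real.sq_sqrt (by positivity)]
    congr 1; funext i; rw [Real.norm_eq_abs, sq_abs]
  rw [h4]; ring

lemma G2 (d : ℕ) :
    ∫ x : Euc d, ‖x‖ ^ 2 * exp (-‖x‖ ^ 2) = gaussC d * d := by
  rw [euc_to_pi d (fun x => ‖x‖ ^ 2 * exp (-‖x‖ ^ 2))]
  have h1 : ∀ y : Fin d → ℝ,
      ‖((MeasurableEquiv.toLp 2 (Fin d → ℝ)) y : Euc d)‖ ^ 2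
        * exp (-‖((MeasurableEquiv.toLp 2 (Fin d → ℝ)) y : Euc d)‖ ^ 2)
      = ∑ i, y i * y i * exp (-∑ k, (y k) ^ 2) := by
    intro y
    rw [norm_sq_symm, Finset.sum_mul]
    congr 1; funext i
    ring
  simp_rw [h1]
  rw [integral_finset_sum _ (fun i _ => gauss_integrable d i i)]
  simp_rw [gauss_diag]
  rw [Finset.sum_const, Finset.card_univ, Fintype.card_fin, nsmul_eq_mul]
  ring

/-! ### Polar decomposition -/

theorem polar_aux {d : ℕ} (hd : 0 < d) (f : Euc d → ℝ) :
    ∫ x : Euc d, f x =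
      ∫ p : Metric.sphere (0 : Euc d) 1 × Set.Ioi (0:ℝ),
        f ((p.2 : ℝ) • (p.1 : Euc d))
        ∂(((volume : Measure (Euc d)).toSphere).prod
            (Measure.volumeIoiPow (Module.finrank ℝ (Euc d) - 1))) := by
  haveI : Nontrivial (Euc d) := by
    refine ⟨0, EuclideanSpace.single ⟨0, hd⟩ 1, ?_⟩
    intro h
    have := congrArg (fun x => x ⟨0, hd⟩) h
    simp [EuclideanSpace.single_apply] at this
  have h1 : ∫ x : Euc d, f x
      = ∫ x : ({0}ᶜ : Set (Euc d)), f x.1 ∂((volume : Measure (Euc d)).comap Subtype.val) := by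
    rw [integral_subtype_comap (measurableSet_singleton _).compl fun x ↦ f x,
      MeasureTheory.restrict_compl_singleton]
  rw [h1]
  have h2 := ((volume : Measure (Euc d)).measurePreserving_homeomorphUnitSphereProd).integral_comp
    (Homeomorph.measurableEmbedding _) (fun p : Metric.sphere (0 : Euc d) 1 × Set.Ioi (0:ℝ) =>
      f ((p.2 : ℝ) • (p.1 : Euc d)))
  rw [← h2]
  apply integral_congr_ae
  filter_upwards with x
  have hx : (x : Euc d) ≠ 0 := x.2
  simp only [homeomorphUnitSphereProd_apply_snd_coe, homeomorphUnitSphereProd_apply_fst_coe]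
  rw [smul_inv_smul₀ (norm_ne_zero_iff.2 hx)]

/-! ### The second-moment identity on the sphere -/

section
variable {d : ℕ}

lemma tsphere_univ_ne_zero (hd : 0 < d) :
    ((volume : Measure (Euc d)).toSphere Set.univ) ≠ 0 := by
  rw [Measure.toSphere_apply_univ]
  refine mul_ne_zero ?_ ?_
  · simp [finrank_euclideanSpace_fin, hd.ne']
  · exact (measure_ball_pos _ _ one_pos).ne'

lemma tsphere_univ_ne_top :
    ((volume : Measure (Euc d)).toSphere Set.univ) ≠ ⊤ := measure_ne_top _ _

lemma uniformSphere_univ (hd : 0 < d) : uniformSphere d Set.univ = 1 := by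
  rw [uniformSphere, Measure.smul_apply, smul_eq_mul]
  exact ENNReal.inv_mul_cancel (tsphere_univ_ne_zero hd) tsphere_univ_ne_top

lemma sphere_decomp (hd : 0 < d) (q : Metric.sphere (0 : Euc d) 1 → ℝ) (v : ℝ → ℝ)
    (f : Euc d → ℝ)
    (hf : ∀ (z : Metric.sphere (0 : Euc d) 1) (r : Set.Ioi (0:ℝ)),
      f ((r : ℝ) • (z : Euc d)) = q z * v (r : ℝ)) :
    ∫ x : Euc d, f x =
      (∫ z, q z ∂((volume : Measure (Euc d)).toSphere)) *
      (∫ r : Set.Ioi (0:ℝ), v (r : ℝ)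
        ∂(Measure.volumeIoiPow (Module.finrank ℝ (Euc d) - 1))) := by
  rw [polar_aux hd f]
  rw [← integral_prod_mul (μ := (volume : Measure (Euc d)).toSphere)
    (ν := Measure.volumeIoiPow (Module.finrank ℝ (Euc d) - 1))
    (f := fun z => q z) (g := fun r : Set.Ioi (0:ℝ) => v (r : ℝ))]
  congr 1
  funext p
  exact hf p.1 p.2

lemma moment (hd : 0 < d) (g : Euc d) :
    ∫ z : Metric.sphere (0 : Euc d) 1, ⟪g, (z : Euc d)⟫ ^ 2 ∂(uniformSphere d)
      = ‖g‖ ^ 2 / d := by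
  set τ := (volume : Measure (Euc d)).toSphere with hτ
  set R := ∫ r : Set.Ioi (0:ℝ), ((r : ℝ) ^ 2 * exp (-(r:ℝ) ^ 2))
      ∂(Measure.volumeIoiPow (Module.finrank ℝ (Euc d) - 1)) with hR
  set Sg := ∫ z : Metric.sphere (0 : Euc d) 1, ⟪g, (z : Euc d)⟫ ^ 2 ∂τ with hSg
  have hnorm : ∀ (z : Metric.sphere (0 : Euc d) 1) (r : Set.Ioi (0:ℝ)),
      ‖(r : ℝ) • (z : Euc d)‖ = (r : ℝ) := by
    intro z r
    have hz : ‖(z : Euc d)‖ = 1 := mem_sphere_zero_iff_norm.1 z.2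
    rw [norm_smul, Real.norm_eq_abs, abs_of_pos r.2, hz, mul_one]
  have eq1 : gaussC d * ‖g‖ ^ 2 = Sg * R := by
    rw [← G1 d g]
    apply sphere_decomp hd (fun z => ⟪g, (z : Euc d)⟫ ^ 2)
      (fun r => r ^ 2 * exp (-r ^ 2)) _
    intro z r
    rw [hnorm z r, real_inner_smul_right, mul_pow]
    ring
  have eq2 : gaussC d * d = (τ Set.univ).toReal * R := by
    have h1 : ∫ z : Metric.sphere (0 : Euc d) 1, (1:ℝ) ∂τ = (τ Set.univ).toReal := by
      rw [integral_const, smul_eq_mul, mul_one, measureReal_def]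
    rw [← G2 d, ← h1]
    apply sphere_decomp hd (fun _ => (1:ℝ)) (fun r => r ^ 2 * exp (-r ^ 2))
    intro z r
    rw [hnorm z r, one_mul]
  have hC := gaussC_pos d
  have hd' : (0:ℝ) < d := Nat.cast_pos.2 hd
  have hT : (0:ℝ) < (τ Set.univ).toReal :=
    ENNReal.toReal_pos (tsphere_univ_ne_zero hd) tsphere_univ_ne_top
  have hRne : R ≠ 0 := by
    intro h
    rw [h, mul_zero] at eq2
    nlinarith
  have hLHS : ∫ z : Metric.sphere (0 : Euc d) 1, ⟪g, (z : Euc d)⟫ ^ 2 ∂(uniformSphere d)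
      = (τ Set.univ).toReal⁻¹ * Sg := by
    rw [uniformSphere, integral_smul_measure, ← hτ, smul_eq_mul, ENNReal.toReal_inv]
  rw [hLHS]
  have hSgval : Sg = gaussC d * ‖g‖ ^ 2 / R := by
    field_simp at eq1 ⊢
    linarith
  have hTval : (τ Set.univ).toReal = gaussC d * d / R := by
    field_simp at eq2 ⊢
    linarith
  rw [hSgval, hTval]
  field_simp

end

/-! ### Main theorem -/

/-- Second moment bound for the zero-order estimate with `μ > 0`:
`E_z‖g(w,z)‖² ≤ 2d‖∇F(w)‖² + L²μ²d²/2`. -/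
theorem stmt12 (d : ℕ) (hd : 0 < d) (F : Euc d → ℝ) (L μ : ℝ) (hμ : 0 < μ) (hL : 0 < L)
    (hF : Differentiable ℝ F)
    (hsmooth : ∀ x y : Euc d, ‖gradient F x - gradient F y‖ ≤ L * ‖x - y‖) (w : Euc d) :
    ∫ z : Metric.sphere (0 : Euc d) 1,
        ‖((d : ℝ) * (F (w + μ • (z : Euc d)) - F (w - μ • (z : Euc d))) / (2 * μ)) •
          (z : Euc d)‖ ^ 2 ∂(uniformSphere d)
      ≤ 2 * (d : ℝ) * ‖gradient F w‖ ^ 2 + L ^ 2 * μ ^ 2 * (d : ℝ) ^ 2 / 2 := by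
  set g := gradient F w with hg
  have hz1 : ∀ z : Metric.sphere (0 : Euc d) 1, ‖(z : Euc d)‖ = 1 :=
    fun z => mem_sphere_zero_iff_norm.1 z.2
  have hpt : ∀ z : Metric.sphere (0 : Euc d) 1,
      ‖((d : ℝ) * (F (w + μ • (z : Euc d)) - F (w - μ • (z : Euc d))) / (2 * μ)) •
          (z : Euc d)‖ ^ 2
      ≤ 2 * (d : ℝ) ^ 2 * ⟪g, (z : Euc d)⟫ ^ 2 + L ^ 2 * μ ^ 2 * (d : ℝ) ^ 2 / 2 := by
    intro z
    rw [norm_smul, Real.norm_eq_abs, hz1 z, mul_one, sq_abs]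
    exact pointwise_bound hμ hF hsmooth w (z : Euc d) (hz1 z)
  have hcont : Continuous fun z : Metric.sphere (0 : Euc d) 1 => ⟪g, (z : Euc d)⟫ ^ 2 :=
    (Continuous.inner continuous_const continuous_subtype_val).pow 2
  have hbdd : ∀ z : Metric.sphere (0 : Euc d) 1, ‖⟪g, (z : Euc d)⟫ ^ 2‖ ≤ ‖g‖ ^ 2 := by
    intro z
    have h := abs_real_inner_le_norm g (z : Euc d)
    rw [hz1 z, mul_one] at h
    rw [Real.norm_eq_abs, abs_of_nonneg (sq_nonneg _), ← sq_abs]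
    exact pow_le_pow_left₀ (abs_nonneg _) h 2
  have hint : Integrable (fun z : Metric.sphere (0 : Euc d) 1 => ⟪g, (z : Euc d)⟫ ^ 2)
      (uniformSphere d) :=
    ⟨hcont.aestronglyMeasurable,
      HasFiniteIntegral.of_bounded (C := ‖g‖ ^ 2) (Filter.Eventually.of_forall hbdd)⟩
  have hint2 : Integrable (fun z : Metric.sphere (0 : Euc d) 1 =>
      2 * (d : ℝ) ^ 2 * ⟪g, (z : Euc d)⟫ ^ 2 + L ^ 2 * μ ^ 2 * (d : ℝ) ^ 2 / 2)
      (uniformSphere d) :=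
    (hint.const_mul _).add (integrable_const _)
  calc ∫ z : Metric.sphere (0 : Euc d) 1,
        ‖((d : ℝ) * (F (w + μ • (z : Euc d)) - F (w - μ • (z : Euc d))) / (2 * μ)) •
          (z : Euc d)‖ ^ 2 ∂(uniformSphere d)
      ≤ ∫ z : Metric.sphere (0 : Euc d) 1,
          (2 * (d : ℝ) ^ 2 * ⟪g, (z : Euc d)⟫ ^ 2 + L ^ 2 * μ ^ 2 * (d : ℝ) ^ 2 / 2)
          ∂(uniformSphere d) := by
        apply integral_mono_of_nonneg
        · exact Filter.Eventually.of_forall fun z => by positivity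
        · exact hint2
        · exact Filter.Eventually.of_forall hpt
    _ = 2 * (d : ℝ) ^ 2 * (‖g‖ ^ 2 / d) + L ^ 2 * μ ^ 2 * (d : ℝ) ^ 2 / 2 := by
        rw [integral_add (hint.const_mul _) (integrable_const _),
          MeasureTheory.integral_const_mul, moment hd g, integral_const,
          measureReal_def, uniformSphere_univ hd]
        simp
    _ = 2 * (d : ℝ) * ‖g‖ ^ 2 + L ^ 2 * μ ^ 2 * (d : ℝ) ^ 2 / 2 := by
        have hd' : (d:ℝ) ≠ 0 := Nat.cast_ne_zero.2 hd.ne'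
        field_simp
end

section
/- (Trimmed mean robustness) Let beta satisfy alpha <= beta < 1/2, and consider m real values where a set of at least (1-alpha)m values x̄^i are 'benign' and the rest are arbitrary. Suppose | (1/((1-alpha)m)) * sum over benign i of x̄^i - mu_x | <= t and max over benign i of |x̄^i - mu_x| <= s. Then the beta-trimmed mean of all m values satisfies |TrMn_beta({x̄^i : i in [m]}) - mu_x| <= (t + 3*beta*s)/(1 - 2*beta). -/
/-- The `β`-trimmed mean of `m` real values: remove the `⌊β m⌋` largest and `⌊β m⌋`
smallest values and average the rest. -/
noncomputable def trimmedMean (m : ℕ) (β : ℝ) (x : Fin m → ℝ) : ℝ :=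
  let b := ⌊β * m⌋₊
  let l := (List.ofFn x).mergeSort (· ≤ ·)
  ((l.drop b).take (m - 2 * b)).sum / (m - 2 * b : ℝ)

lemma abs_multiset_sum_le (M : Multiset ℝ) (s : ℝ) (h : ∀ v ∈ M, |v| ≤ s) :
    |M.sum| ≤ (Multiset.card M : ℝ) * s := by
  induction M using Multiset.induction with
  | empty => simp
  | cons a M ih =>
    have ha := h a (Multiset.mem_cons_self a M)
    have hM := ih (fun v hv => h v (Multiset.mem_cons_of_mem hv))
    simp only [Multiset.sum_cons, Multiset.card_cons]
    calc |a + M.sum| ≤ |a| + |M.sum| := abs_add_le _ _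
      _ ≤ s + (Multiset.card M : ℝ) * s := add_le_add ha hM
      _ = ((Multiset.card M : ℝ) + 1) * s := by ring
      _ = (((Multiset.card M : ℕ) + 1 : ℕ) : ℝ) * s := by push_cast; ring

lemma sorted_countP_lb {l : List ℝ} (hl : l.Pairwise (· ≤ ·)) (c : ℝ) (j : ℕ)
    (hj : j < l.length) (h : l[j] < c) :
    j + 1 ≤ l.countP (fun a => decide (a < c)) := by
  have hsub : (l.take (j + 1)).Sublist l := List.take_sublist _ _
  have hlen : (l.take (j + 1)).length = j + 1 := by
    rw [List.length_take]; omega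
  have hall : ∀ a ∈ l.take (j + 1), (fun a => decide (a < c)) a = true := by
    intro a ha
    rw [List.mem_iff_getElem] at ha
    obtain ⟨i, hi, rfl⟩ := ha
    have hi' : i < j + 1 := by omega
    rw [List.getElem_take]
    simp only [decide_eq_true_eq]
    rcases lt_or_eq_of_le (Nat.lt_succ_iff.mp hi') with hij | hij
    · exact lt_of_le_of_lt (hl.rel_get_of_lt (show (⟨i, by omega⟩ : Fin l.length) < ⟨j, hj⟩ from hij)) h
    · subst hij; exact h
  calc j + 1 = (l.take (j + 1)).countP (fun a => decide (a < c)) := by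
        rw [List.countP_eq_length.mpr hall, hlen]
    _ ≤ l.countP (fun a => decide (a < c)) := hsub.countP_le

lemma sorted_countP_ub {l : List ℝ} (hl : l.Pairwise (· ≤ ·)) (c : ℝ) (j : ℕ)
    (hj : j < l.length) (h : c < l[j]) :
    l.length - j ≤ l.countP (fun a => decide (c < a)) := by
  have hsub : (l.drop j).Sublist l := List.drop_sublist _ _
  have hlen : (l.drop j).length = l.length - j := List.length_drop
  have hall : ∀ a ∈ l.drop j, (fun a => decide (c < a)) a = true := by
    intro a ha
    rw [List.mem_iff_getElem] at ha
    obtain ⟨i, hi, rfl⟩ := ha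
    rw [List.getElem_drop]
    simp only [decide_eq_true_eq]
    rcases Nat.eq_zero_or_pos i with hi0 | hi0
    · subst hi0; simpa using h
    · exact lt_of_lt_of_le h (hl.rel_get_of_lt (show (⟨j, hj⟩ : Fin l.length) < ⟨j + i, by omega⟩ from by
        simp [Fin.lt_def]; omega))
  calc l.length - j = (l.drop j).countP (fun a => decide (c < a)) := by
        rw [List.countP_eq_length.mpr hall, hlen]
    _ ≤ l.countP (fun a => decide (c < a)) := hsub.countP_le

lemma countP_finRange (n : ℕ) (q : Fin n → Prop) [DecidablePred q] :
    (List.finRange n).countP (fun i => decide (q i)) = (Finset.univ.filter q).card := by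
  simp [Fin.univ_def, Finset.filter, Finset.card, List.countP_eq_length_filter]

lemma sum_map_sub_const (M : Multiset ℝ) (c : ℝ) :
    (M.map (fun v => v - c)).sum = M.sum - (Multiset.card M : ℝ) * c := by
  induction M using Multiset.induction with
  | empty => simp
  | cons a M ih => simp [ih]; ring

set_option maxHeartbeats 1000000 in
/-- Robustness of the trimmed mean: if the benign values have empirical mean within `t`
of `μx` and are each within `s` of `μx`, then the `β`-trimmed mean of all `m` values is
within `(t + 3βs)/(1 - 2β)` of `μx`. -/
theorem stmt19 (m : ℕ) (hm : 0 < m) (α β μx t s : ℝ) (x : Fin m → ℝ)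
    (S : Finset (Fin m)) (hα0 : 0 ≤ α) (hαβ : α ≤ β) (hβ : β < 1 / 2)
    (ht : 0 ≤ t) (hs : 0 ≤ s)
    (hcard : (S.card : ℝ) = (1 - α) * m)
    (hmean : |(((1 - α) * m)⁻¹ * ∑ i ∈ S, x i) - μx| ≤ t)
    (hmax : ∀ i ∈ S, |x i - μx| ≤ s) :
    |trimmedMean m β x - μx| ≤ (t + 3 * β * s) / (1 - 2 * β) := by
  classical
  set b := ⌊β * m⌋₊ with hb_def
  set l := (List.ofFn x).mergeSort (· ≤ ·) with hl_def
  have hperm : l.Perm (List.ofFn x) := List.mergeSort_perm _ _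
  have hlen : l.length = m := by rw [hperm.length_eq, List.length_ofFn]
  have hsorted : l.Pairwise (· ≤ ·) := by
    have h := List.pairwise_mergeSort (le := fun a b : ℝ => a ≤ b)
      (fun a b c hab hbc => by simp_all; linarith)
      (fun a b => by simp [le_total]) (List.ofFn x)
    simpa using h
  have hβ0 : 0 ≤ β := le_trans hα0 hαβ
  have hm' : (0:ℝ) < m := by exact_mod_cast hm
  have hbβm : (b : ℝ) ≤ β * m := Nat.floor_le (by positivity)
  have h2b : 2 * b < m := by
    have : (2 * b : ℝ) < m := by nlinarith
    exact_mod_cast this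
  have hScard_le : S.card ≤ m := le_trans (Finset.card_le_card (Finset.subset_univ S)) (by simp)
  have hmc : ((m - S.card : ℕ) : ℝ) = α * m := by
    push_cast [hScard_le]
    rw [hcard]; ring
  have hmcb : m - S.card ≤ b := by
    apply Nat.le_floor
    rw [hmc]
    nlinarith
  -- counting bounds
  have hcount_lo : l.countP (fun a => decide (a < μx - s)) ≤ b := by
    have h1 : l.countP (fun a => decide (a < μx - s))
        = (List.finRange m).countP (fun i => decide (x i < μx - s)) := by
      rw [hperm.countP_eq, List.ofFn_eq_map, List.countP_map]
      rfl
    rw [h1, countP_finRange]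
    calc (Finset.univ.filter (fun i => x i < μx - s)).card
        ≤ (Finset.univ \ S).card := by
          apply Finset.card_le_card
          intro i hi
          simp only [Finset.mem_filter, Finset.mem_univ, true_and] at hi
          simp only [Finset.mem_sdiff, Finset.mem_univ, true_and]
          intro hiS
          have := abs_le.mp (hmax i hiS)
          linarith [this.1]
      _ = m - S.card := by rw [Finset.card_sdiff_of_subset (Finset.subset_univ S)]; simp
      _ ≤ b := hmcb
  have hcount_hi : l.countP (fun a => decide (μx + s < a)) ≤ b := by
    have h1 : l.countP (fun a => decide (μx + s < a))
        = (List.finRange m).countP (fun i => decide (μx + s < x i)) := by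
      rw [hperm.countP_eq, List.ofFn_eq_map, List.countP_map]
      rfl
    rw [h1, countP_finRange]
    calc (Finset.univ.filter (fun i => μx + s < x i)).card
        ≤ (Finset.univ \ S).card := by
          apply Finset.card_le_card
          intro i hi
          simp only [Finset.mem_filter, Finset.mem_univ, true_and] at hi
          simp only [Finset.mem_sdiff, Finset.mem_univ, true_and]
          intro hiS
          have := abs_le.mp (hmax i hiS)
          linarith [this.2]
      _ = m - S.card := by rw [Finset.card_sdiff_of_subset (Finset.subset_univ S)]; simp
      _ ≤ b := hmcb
  -- kept elements are within s of μx
  have hel : ∀ j (hj : j < l.length), b ≤ j → j < m - b → |l[j] - μx| ≤ s := by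
    intro j hj hbj hjb
    rw [abs_le]
    constructor
    · by_contra hcon
      push_neg at hcon
      have : j + 1 ≤ l.countP (fun a => decide (a < μx - s)) :=
        sorted_countP_lb hsorted _ j hj (by linarith)
      omega
    · by_contra hcon
      push_neg at hcon
      have : l.length - j ≤ l.countP (fun a => decide (μx + s < a)) :=
        sorted_countP_ub hsorted _ j hj (by linarith)
      omega
  set n := m - 2 * b with hn_def
  set seg := (l.drop b).take n with hseg_def
  have hseglen : seg.length = n := by
    rw [hseg_def, List.length_take, List.length_drop, hlen]; omega
  have hsegel : ∀ v ∈ seg, |v - μx| ≤ s := by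
    intro v hv
    rw [List.mem_iff_getElem] at hv
    obtain ⟨i, hi, rfl⟩ := hv
    simp only [hseg_def] at hi ⊢
    rw [List.getElem_take, List.getElem_drop]
    apply hel
    · omega
    · simp only [List.length_take, List.length_drop, hlen] at hi; omega
  -- multisets
  have hsub : seg.Sublist l := ((l.drop b).take_sublist n).trans (l.drop_sublist b)
  set T : Multiset ℝ := (seg : Multiset ℝ) with hT_def
  set L : Multiset ℝ := (l : Multiset ℝ) with hL_def
  have hTL : T ≤ L := Multiset.coe_le.mpr hsub.subperm
  set B : Multiset ℝ := S.val.map x with hB_def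
  have hBL : B ≤ L := by
    have h1 : L = Finset.univ.val.map x := by
      have h2 : (l : Multiset ℝ) = ((List.ofFn x : List ℝ) : Multiset ℝ) := Quot.sound hperm
      rw [hL_def, h2, List.ofFn_eq_map, Fin.univ_def]
      simp [Multiset.map_coe]
    rw [h1, hB_def]
    exact Multiset.map_le_map (Finset.val_le_iff.mpr (Finset.subset_univ S))
  set f : ℝ → ℝ := fun v => v - μx with hf_def
  set T' := T.map f with hT'_def
  set B' := B.map f with hB'_def
  set L' := L.map f with hL'_def
  have hT'L' : T' ≤ L' := Multiset.map_le_map hTL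
  have hB'L' : B' ≤ L' := Multiset.map_le_map hBL
  have hcardT' : Multiset.card T' = n := by
    simp [hT'_def, hT_def, hseglen]
  have hcardB' : Multiset.card B' = S.card := by
    simp [hB'_def, hB_def]
  have hcardL' : Multiset.card L' = m := by
    simp [hL'_def, hL_def, hlen]
  have hkey : T'.sum = B'.sum + (T' - B').sum - (B' - T').sum := by
    have h1 : (T' - B').sum + (T' ∩ B').sum = T'.sum := by
      rw [← Multiset.sum_add, Multiset.sub_add_inter]
    have h2 : (B' - T').sum + (B' ∩ T').sum = B'.sum := by
      rw [← Multiset.sum_add, Multiset.sub_add_inter]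
    rw [Multiset.inter_comm] at h2
    linarith
  have hSpos : 0 < S.card := by omega
  have hcpos : (0:ℝ) < (1 - α) * m := by rw [← hcard]; exact_mod_cast hSpos
  have hB'sum : |B'.sum| ≤ (1 - α) * m * t := by
    have hBsum : B.sum = ∑ i ∈ S, x i := rfl
    have h1 : B'.sum = (∑ i ∈ S, x i) - ((1 - α) * m) * μx := by
      rw [hB'_def, hf_def, sum_map_sub_const, hBsum]
      congr 1
      rw [hB_def]
      simp [← hcard]
    have h2 : (∑ i ∈ S, x i) - ((1 - α) * m) * μx
        = ((1 - α) * m) * ((((1 - α) * m)⁻¹ * ∑ i ∈ S, x i) - μx) := by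
      rw [mul_sub, mul_inv_cancel_left₀ hcpos.ne']
    rw [h1, h2, abs_mul, abs_of_pos hcpos]
    exact mul_le_mul_of_nonneg_left hmean hcpos.le
  have hcard_sub1 : Multiset.card (T' - B') ≤ b := by
    have h1 : T' - B' ≤ L' - B' := tsub_le_tsub_right hT'L' _
    have h2 := Multiset.card_le_card h1
    rw [Multiset.card_sub hB'L'] at h2
    omega
  have hcard_sub2 : Multiset.card (B' - T') ≤ 2 * b := by
    have h1 : B' - T' ≤ L' - T' := tsub_le_tsub_right hB'L' _
    have h2 := Multiset.card_le_card h1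
    rw [Multiset.card_sub hT'L'] at h2
    omega
  have hT'el : ∀ v ∈ T', |v| ≤ s := by
    intro v hv
    rw [hT'_def] at hv
    obtain ⟨w, hw, rfl⟩ := Multiset.mem_map.mp hv
    exact hsegel w (by rwa [hT_def, Multiset.mem_coe] at hw)
  have hB'el : ∀ v ∈ B', |v| ≤ s := by
    intro v hv
    rw [hB'_def] at hv
    obtain ⟨w, hw, rfl⟩ := Multiset.mem_map.mp hv
    rw [hB_def] at hw
    obtain ⟨i, hi, rfl⟩ := Multiset.mem_map.mp hw
    exact hmax i hi
  have hsum1 : |(T' - B').sum| ≤ (b : ℝ) * s := by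
    calc |(T' - B').sum| ≤ (Multiset.card (T' - B') : ℝ) * s :=
          abs_multiset_sum_le _ _ (fun v hv => hT'el v (Multiset.mem_of_le tsub_le_self hv))
      _ ≤ (b : ℝ) * s := by
          apply mul_le_mul_of_nonneg_right _ hs
          exact_mod_cast hcard_sub1
  have hsum2 : |(B' - T').sum| ≤ (2 * b : ℝ) * s := by
    calc |(B' - T').sum| ≤ (Multiset.card (B' - T') : ℝ) * s :=
          abs_multiset_sum_le _ _ (fun v hv => hB'el v (Multiset.mem_of_le tsub_le_self hv))
      _ ≤ (2 * b : ℝ) * s := by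
          apply mul_le_mul_of_nonneg_right _ hs
          exact_mod_cast hcard_sub2
  have hfin : |T'.sum| ≤ (1 - α) * m * t + 3 * b * s := by
    rw [hkey, sub_eq_add_neg]
    calc |B'.sum + (T' - B').sum + -(B' - T').sum|
        ≤ |B'.sum + (T' - B').sum| + |(B' - T').sum| := by
          rw [← abs_neg (B' - T').sum] ; exact abs_add_le _ _
      _ ≤ |B'.sum| + |(T' - B').sum| + |(B' - T').sum| := by
          have := abs_add_le B'.sum (T' - B').sum ; linarith
      _ ≤ (1 - α) * m * t + (b : ℝ) * s + (2 * b : ℝ) * s := by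
          gcongr
      _ = (1 - α) * m * t + 3 * b * s := by ring
  -- compute trimmedMean
  have hncast : (n : ℝ) = (m : ℝ) - 2 * b := by
    rw [hn_def] ; push_cast [le_of_lt h2b] ; ring
  have hDpos : (0:ℝ) < (m : ℝ) - 2 * b := by
    have : ((2 * b : ℕ) : ℝ) < m := by exact_mod_cast h2b
    push_cast at this ; linarith
  have htm : trimmedMean m β x = seg.sum / ((m : ℝ) - 2 * b) := rfl
  have hTsum : T.sum = seg.sum := rfl
  have hT'sum : T'.sum = seg.sum - ((m:ℝ) - 2 * b) * μx := by
    rw [hT'_def, hf_def, sum_map_sub_const, hTsum, hT_def]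
    congr 2
    simp [hseglen, hncast]
  have heq : trimmedMean m β x - μx = T'.sum / ((m : ℝ) - 2 * b) := by
    rw [htm, hT'sum]
    field_simp
  rw [heq, abs_div, abs_of_pos hDpos]
  have hfinal : ((1 - α) * m * t + 3 * b * s) / ((m : ℝ) - 2 * b)
      ≤ (t + 3 * β * s) / (1 - 2 * β) := by
    have hR : (t + 3 * β * s) / (1 - 2 * β)
        = ((m : ℝ) * t + 3 * β * m * s) / ((1 - 2 * β) * m) := by
      rw [show (m : ℝ) * t + 3 * β * m * s = (t + 3 * β * s) * m by ring,
          show (1 - 2 * β) * (m : ℝ) = (1 - 2 * β) * m by ring]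
      rw [mul_comm (1 - 2 * β) (m:ℝ), mul_comm (t + 3 * β * s) (m:ℝ),
          mul_div_mul_left _ _ (ne_of_gt hm')]
    rw [hR]
    apply div_le_div₀ (by positivity) ?_ ?_ ?_
    · nlinarith
    · nlinarith
    · nlinarith
  calc |T'.sum| / ((m : ℝ) - 2 * b)
      ≤ ((1 - α) * m * t + 3 * b * s) / ((m : ℝ) - 2 * b) := by
        gcongr
    _ ≤ _ := hfinal
end
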